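/- Under the setting of the previous mixture with g_n(b̄_n) = 1/((n-1)(v̄ - b̄_n)) where v̄ > b̄_{n̄}, the jump sizes Δ_n = n p_n / ((n-1)(v̄ - b̄_n)) together with Σ p_n = 1 determine v̄ uniquely as v̄ = (1 + Σ_n ((n-1)/n) Δ_n b̄_n) / (Σ_n ((n-1)/n) Δ_n). -/

import Mathlib

theorem stmt7 (nlo nhi : ℕ) (hlo : 2 ≤ nlo) (hle : nlo ≤ nhi)
    (p Δ bb : ℕ → ℝ) (vbar : ℝ)
    (hp : ∀ n ∈ Finset.Icc nlo nhi, 0 < p n)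
    (hsum : ∑ n ∈ Finset.Icc nlo nhi, p n = 1)
    (hv : ∀ n ∈ Finset.Icc nlo nhi, bb n < vbar)
    (hΔ : ∀ n ∈ Finset.Icc nlo nhi,
      Δ n = (n : ℝ) * p n / (((n:ℝ) - 1) * (vbar - bb n))) :
    vbar = (1 + ∑ n ∈ Finset.Icc nlo nhi, ((n:ℝ) - 1) / n * Δ n * bb n)
           / (∑ n ∈ Finset.Icc nlo nhi, ((n:ℝ) - 1) / n * Δ n) := by
  have key : ∀ n ∈ Finset.Icc nlo nhi,
      ((n:ℝ) - 1) / n * Δ n = p n / (vbar - bb n) := by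
    intro n hn
    have h2 : 2 ≤ n := le_trans hlo (Finset.mem_Icc.mp hn).1
    have hn0 : (n:ℝ) ≠ 0 := by positivity
    have hn1 : (n:ℝ) - 1 ≠ 0 := by
      have : (2:ℝ) ≤ n := by exact_mod_cast h2
      nlinarith
    have hvb : vbar - bb n ≠ 0 := sub_ne_zero.mpr (hv n hn).ne'
    rw [hΔ n hn]
    field_simp
  have h1 : ∑ n ∈ Finset.Icc nlo nhi,
      ((n:ℝ) - 1) / n * Δ n * (vbar - bb n) = 1 := by
    have hc : ∀ n ∈ Finset.Icc nlo nhi,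
        ((n:ℝ) - 1) / n * Δ n * (vbar - bb n) = p n := by
      intro n hn
      rw [key n hn]
      have hvb : vbar - bb n ≠ 0 := sub_ne_zero.mpr (hv n hn).ne'
      field_simp
    rw [Finset.sum_congr rfl hc, hsum]
  have hSpos : 0 < ∑ n ∈ Finset.Icc nlo nhi, ((n:ℝ) - 1) / n * Δ n := by
    apply Finset.sum_pos
    · intro n hn
      rw [key n hn]
      exact div_pos (hp n hn) (sub_pos.mpr (hv n hn))
    · exact ⟨nlo, Finset.mem_Icc.mpr ⟨le_refl _, hle⟩⟩
  rw [eq_div_iff hSpos.ne']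
  have expand : ∑ n ∈ Finset.Icc nlo nhi,
      ((n:ℝ) - 1) / n * Δ n * (vbar - bb n)
      = vbar * ∑ n ∈ Finset.Icc nlo nhi, ((n:ℝ) - 1) / n * Δ n
        - ∑ n ∈ Finset.Icc nlo nhi, ((n:ℝ) - 1) / n * Δ n * bb n := by
    rw [Finset.mul_sum, ← Finset.sum_sub_distrib]
    exact Finset.sum_congr rfl fun n _ => by ring
  rw [expand] at h1
  linarith
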